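/- The function f(c) = −(1/6)(2+c²)(√(c²+8) − 3c) − c·ln((1/4)c(c+√(c²+8))) satisfies f(1) = 0, f'(1) = 0, and f''(c) > 0 for all c > 1. -/

import Mathlib

lemma hasDerivAt_sqrt8 (c : ℝ) :
    HasDerivAt (fun x : ℝ => Real.sqrt (x ^ 2 + 8)) (c / Real.sqrt (c ^ 2 + 8)) c := by
  have h1 : HasDerivAt (fun x : ℝ => x ^ 2 + 8) (2 * c) c := by
    simpa using (hasDerivAt_pow 2 c).add_const 8
  have h2 := h1.sqrt (by positivity)
  convert h2 using 1
  have hs : (0:ℝ) < Real.sqrt (c ^ 2 + 8) := Real.sqrt_pos.mpr (by positivity)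
  field_simp

lemma hasDerivAt_f (c : ℝ) (hc : 0 < c) :
    HasDerivAt (fun c : ℝ =>
      -(1 / 6) * (2 + c ^ 2) * (Real.sqrt (c ^ 2 + 8) - 3 * c)
        - c * Real.log (1 / 4 * c * (c + Real.sqrt (c ^ 2 + 8))))
      (3 / 2 * c ^ 2 - 1 / 2 * c * Real.sqrt (c ^ 2 + 8)
        - Real.log (1 / 4 * c * (c + Real.sqrt (c ^ 2 + 8)))) c := by
  have hspos : (0:ℝ) < Real.sqrt (c ^ 2 + 8) := Real.sqrt_pos.mpr (by positivity)
  have hs2 : Real.sqrt (c ^ 2 + 8) ^ 2 = c ^ 2 + 8 := Real.sq_sqrt (by positivity)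
  have hs := hasDerivAt_sqrt8 c
  have h1 : HasDerivAt (fun x : ℝ => -(1/6) * (2 + x ^ 2)) (-(1/6) * (2 * c)) c := by
    have := ((hasDerivAt_pow 2 c).const_add 2).const_mul (-(1/6) : ℝ)
    simpa using this
  have h2 : HasDerivAt (fun x : ℝ => Real.sqrt (x ^ 2 + 8) - 3 * x)
      (c / Real.sqrt (c ^ 2 + 8) - 3) c := by
    exact (hs.sub ((hasDerivAt_id c).const_mul 3)).congr_deriv (by ring)
  have hA := h1.mul h2
  have h3 : HasDerivAt (fun x : ℝ => 1 / 4 * x) (1 / 4 : ℝ) c := by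
    simpa using (hasDerivAt_id c).const_mul (1/4 : ℝ)
  have h4 : HasDerivAt (fun x : ℝ => x + Real.sqrt (x ^ 2 + 8))
      (1 + c / Real.sqrt (c ^ 2 + 8)) c := (hasDerivAt_id c).add hs
  have hu := h3.mul h4
  have hupos : (0:ℝ) < 1 / 4 * c * (c + Real.sqrt (c ^ 2 + 8)) := by
    have : 0 < c + Real.sqrt (c ^ 2 + 8) := by linarith
    positivity
  have hB := (hasDerivAt_id c).mul (hu.log hupos.ne')
  have hAB := hA.sub hB
  refine hAB.congr_deriv (Eq.symm ?_)
  simp only [id, Pi.mul_apply]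
  generalize hsd : Real.sqrt (c ^ 2 + 8) = s at *
  have hcs : (0:ℝ) < c + s := by linarith
  field_simp
  linear_combination (-2*c*(c+s)) * hs2
lemma hasDerivAt_g (c : ℝ) (hc : 0 < c) :
    HasDerivAt (fun c : ℝ =>
      3 / 2 * c ^ 2 - 1 / 2 * c * Real.sqrt (c ^ 2 + 8)
        - Real.log (1 / 4 * c * (c + Real.sqrt (c ^ 2 + 8))))
      (3 * c - (c ^ 2 + 4) / Real.sqrt (c ^ 2 + 8)
        - (c + Real.sqrt (c ^ 2 + 8)) / (c * Real.sqrt (c ^ 2 + 8))) c := by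
  have hspos : (0:ℝ) < Real.sqrt (c ^ 2 + 8) := Real.sqrt_pos.mpr (by positivity)
  have hs2 : Real.sqrt (c ^ 2 + 8) ^ 2 = c ^ 2 + 8 := Real.sq_sqrt (by positivity)
  have hs := hasDerivAt_sqrt8 c
  have hA : HasDerivAt (fun x : ℝ => 3 / 2 * x ^ 2) (3 * c) c := by
    have := (hasDerivAt_pow 2 c).const_mul (3/2 : ℝ)
    refine this.congr_deriv (Eq.symm ?_)
    ring
  have h1 : HasDerivAt (fun x : ℝ => 1 / 2 * x) (1 / 2 : ℝ) c := by
    simpa using (hasDerivAt_id c).const_mul (1/2 : ℝ)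
  have hB := h1.mul hs
  have h3 : HasDerivAt (fun x : ℝ => 1 / 4 * x) (1 / 4 : ℝ) c := by
    simpa using (hasDerivAt_id c).const_mul (1/4 : ℝ)
  have h4 : HasDerivAt (fun x : ℝ => x + Real.sqrt (x ^ 2 + 8))
      (1 + c / Real.sqrt (c ^ 2 + 8)) c := (hasDerivAt_id c).add hs
  have hu := h3.mul h4
  have hupos : (0:ℝ) < 1 / 4 * c * (c + Real.sqrt (c ^ 2 + 8)) := by
    have : 0 < c + Real.sqrt (c ^ 2 + 8) := by linarith
    positivity
  have hC := hu.log hupos.ne'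
  have hABC := (hA.sub hB).sub hC
  refine hABC.congr_deriv (Eq.symm ?_)
  simp only [Pi.mul_apply]
  generalize hsd : Real.sqrt (c ^ 2 + 8) = s at *
  have hcs : (0:ℝ) < c + s := by linarith
  field_simp
  linear_combination (c*(c+s)) * hs2

lemma sqrt_nine : Real.sqrt 9 = 3 := by
  rw [show (9:ℝ) = 3 ^ 2 by norm_num, Real.sqrt_sq (by norm_num)]

theorem f_convexity_properties :
    let f : ℝ → ℝ := fun c =>
      -(1 / 6) * (2 + c ^ 2) * (Real.sqrt (c ^ 2 + 8) - 3 * c)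
        - c * Real.log (1 / 4 * c * (c + Real.sqrt (c ^ 2 + 8)))
    f 1 = 0 ∧ deriv f 1 = 0 ∧ ∀ c : ℝ, 1 < c → 0 < deriv (deriv f) c := by
  intro f
  have h9 : Real.sqrt ((1:ℝ) ^ 2 + 8) = 3 := by norm_num [sqrt_nine]
  refine ⟨?_, ?_, ?_⟩
  · show -(1 / 6) * (2 + (1:ℝ) ^ 2) * (Real.sqrt ((1:ℝ) ^ 2 + 8) - 3 * 1)
        - 1 * Real.log (1 / 4 * 1 * (1 + Real.sqrt ((1:ℝ) ^ 2 + 8))) = 0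
    rw [h9]
    norm_num
  · rw [(hasDerivAt_f 1 one_pos).deriv, h9]
    norm_num
  · intro c hc
    have hc0 : (0:ℝ) < c := by linarith
    have heq : deriv f =ᶠ[nhds c] fun c : ℝ =>
        3 / 2 * c ^ 2 - 1 / 2 * c * Real.sqrt (c ^ 2 + 8)
          - Real.log (1 / 4 * c * (c + Real.sqrt (c ^ 2 + 8))) := by
      filter_upwards [Ioi_mem_nhds hc0] with x hx
      exact (hasDerivAt_f x hx).deriv
    rw [heq.deriv_eq, (hasDerivAt_g c hc0).deriv]
    -- positivity of second derivative
    have hspos : (0:ℝ) < Real.sqrt (c ^ 2 + 8) := Real.sqrt_pos.mpr (by positivity)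
    have hs2 : Real.sqrt (c ^ 2 + 8) ^ 2 = c ^ 2 + 8 := Real.sq_sqrt (by positivity)
    set s := Real.sqrt (c ^ 2 + 8) with hsdef
    have key : c ^ 3 + 5 * c < s * (3 * c ^ 2 - 1) := by
      have h1 : (c ^ 3 + 5 * c) ^ 2 < (s * (3 * c ^ 2 - 1)) ^ 2 := by
        nlinarith [hs2, sq_nonneg (c^2-1), sq_nonneg c, hc]
      have h2 : 0 ≤ s * (3 * c ^ 2 - 1) := by nlinarith
      exact lt_of_pow_lt_pow_left₀ 2 h2 h1
    have hgoal : (c ^ 2 + 4) / s + (c + s) / (c * s) < 3 * c := by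
      rw [div_add_div _ _ hspos.ne' (by positivity : c * s ≠ 0),
        div_lt_iff₀ (by positivity)]
      nlinarith [key, hc0, hspos]
    linarith [hgoal]
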